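/- (Interval Lemma) Let u₁ < u₂ and v₁ < v₂ be real numbers, U = [u₁, u₂], V = [v₁, v₂], and U + V = [u₁+v₁, u₂+v₂]. Let f : U → ℝ, g : V → ℝ, h : U+V → ℝ be bounded functions satisfying f(u) + g(v) = h(u+v) for every u ∈ U, v ∈ V. Then there exists c ∈ ℝ such that f(u) = f(u₁) + c(u - u₁) for all u ∈ U, g(v) = g(v₁) + c(v - v₁) for all v ∈ V, and h(w) = h(u₁+v₁) + c(w - u₁ - v₁) for all w ∈ U + V. -/

import Mathlib

lemma stmt9_aux (L M : ℝ) (hL : 0 < L) (E : ℝ → ℝ)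
    (hadd : ∀ s t, 0 ≤ s → 0 ≤ t → s + t ≤ L → E (s + t) = E s + E t)
    (hbd : ∀ t, 0 ≤ t → t ≤ L → |E t| ≤ M)
    (hEL : E L = 0) :
    ∀ t, 0 ≤ t → t ≤ L → E t = 0 := by
  have hE0 : E 0 = 0 := by
    have h0 := hadd 0 0 le_rfl le_rfl (by linarith)
    simp at h0; linarith
  set M' : ℝ := M + 1 with hM'
  have hM0 : 0 < M' := by
    have := (abs_nonneg (E 0)).trans (hbd 0 le_rfl hL.le); simp [hM']; linarith
  have hbd' : ∀ t, 0 ≤ t → t ≤ L → |E t| ≤ M' := fun t h1 h2 => (hbd t h1 h2).trans (by linarith)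
  -- Step 1: natural multiples
  have step1 : ∀ n : ℕ, ∀ t, 0 ≤ t → (n : ℝ) * t ≤ L → E ((n : ℝ) * t) = n * E t := by
    intro n
    induction n with
    | zero => intro t _ _; simpa using hE0
    | succ n ih =>
      intro t ht hle
      push_cast at hle ⊢
      have h1 : (n : ℝ) * t ≤ L := by nlinarith
      have h2 := hadd ((n : ℝ) * t) t (by positivity) ht (by linarith)
      have h3 : (n : ℝ) * t + t = (n + 1) * t := by ring
      rw [← h3, h2, ih t ht h1]; ring
  -- Step 2: bound near zero
  have step2 : ∀ s, 0 ≤ s → s ≤ L → |E s| ≤ 2 * M' * s / L := by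
    intro s hs0 hsL
    rcases eq_or_lt_of_le hs0 with hs | hs
    · subst hs; simpa [hE0] using by positivity
    · set n : ℕ := ⌊L / s⌋₊ with hn
      have hx1 : 1 ≤ L / s := (one_le_div hs).mpr hsL
      have hn1 : 1 ≤ n := Nat.le_floor (by exact_mod_cast hx1)
      have hnle : (n : ℝ) ≤ L / s := Nat.floor_le (by positivity)
      have hnlt : L / s < n + 1 := Nat.lt_floor_add_one _
      have hns : (n : ℝ) * s ≤ L := by
        rw [← le_div_iff₀ hs]; exact hnle
      have he : E ((n : ℝ) * s) = n * E s := step1 n s hs0 hns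
      have hb : |(n : ℝ) * E s| ≤ M' := by
        rw [← he]; exact hbd' _ (by positivity) hns
      have hn2 : L / (2 * s) < (n : ℝ) := by
        have h1n : (1 : ℝ) ≤ (n : ℝ) := by exact_mod_cast hn1
        have hL2 : L < ((n : ℝ) + 1) * s := (div_lt_iff₀ hs).mp hnlt
        rw [div_lt_iff₀ (by positivity)]
        nlinarith
      rw [abs_mul, abs_of_nonneg (by positivity : (0:ℝ) ≤ (n:ℝ))] at hb
      have hnpos : (0:ℝ) < n := by positivity
      rw [div_lt_iff₀ (by positivity)] at hn2
      rw [le_div_iff₀ hL]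
      nlinarith [abs_nonneg (E s)]
  -- Step 3: rational multiples
  have step3 : ∀ q : ℚ, 0 ≤ q → ∀ t, 0 ≤ t → t ≤ L → (q : ℝ) * t ≤ L →
      E ((q : ℝ) * t) = q * E t := by
    intro q hq0 t ht0 htL hqtL
    obtain ⟨m, hm⟩ : ∃ m : ℕ, (q.num : ℤ) = m := ⟨q.num.toNat, (Int.toNat_of_nonneg (Rat.num_nonneg.mpr hq0)).symm⟩
    have hden : (0 : ℝ) < (q.den : ℝ) := by exact_mod_cast q.pos
    have hqcast : (q : ℝ) = (m : ℝ) / (q.den : ℝ) := by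
      rw [Rat.cast_def, hm]; push_cast; ring
    set s : ℝ := t / q.den with hs
    have hs0 : 0 ≤ s := by positivity
    have hts : (q.den : ℝ) * s = t := by rw [hs, mul_div_assoc']; exact mul_div_cancel_left₀ t hden.ne'
    have e1 : E t = q.den * E s := by
      rw [← hts]; exact step1 q.den s hs0 (by rw [hts]; exact htL)
    have hms : (m : ℝ) * s = (q : ℝ) * t := by rw [hqcast, hs]; field_simp
    have e2 : E ((m : ℝ) * s) = m * E s := step1 m s hs0 (by rw [hms]; exact hqtL)
    rw [← hms, e2, hqcast, e1]
    field_simp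
  -- Final step
  intro t ht0 htL
  rcases eq_or_lt_of_le ht0 with ht | ht
  · rw [← ht]; exact hE0
  by_contra hne
  have habs : 0 < |E t| := abs_pos.mpr hne
  set δ : ℝ := min (L / (2 * t)) (|E t| * L * L / (8 * M' * t * t)) with hδ
  have hδpos : 0 < δ :=
    lt_min (by positivity) (div_pos (by positivity) (by positivity))
  obtain ⟨q, hq1, hq2⟩ := exists_rat_btwn (show L / t - δ < L / t by linarith)
  have hδ1 : δ ≤ L / (2 * t) := min_le_left _ _
  have hδ2 : δ ≤ |E t| * L * L / (8 * M' * t * t) := min_le_right _ _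
  have hhalf : L / t - L / (2 * t) = L / (2 * t) := by field_simp; ring
  have hqlb : L / (2 * t) < (q : ℝ) := by linarith
  have hq0 : 0 < (q : ℝ) := lt_trans (by positivity) hqlb
  have hqt : (q : ℝ) * t ≤ L := ((lt_div_iff₀ ht).mp hq2).le
  have e3 : E ((q : ℝ) * t) = q * E t :=
    step3 q (by exact_mod_cast hq0.le) t ht0 htL hqt
  have e4 : E L = E ((q : ℝ) * t) + E (L - (q : ℝ) * t) := by
    have h9 := hadd ((q : ℝ) * t) (L - (q : ℝ) * t) (by positivity) (by linarith) (by linarith)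
    rw [← h9]; ring_nf
  have e5 : E ((q : ℝ) * t) = -(E (L - (q : ℝ) * t)) := by
    rw [hEL] at e4; linarith
  have h6 : |(q : ℝ) * E t| ≤ 2 * M' * (L - (q : ℝ) * t) / L := by
    rw [← e3, e5, abs_neg]
    exact step2 _ (by linarith) (by nlinarith)
  -- clear denominators
  have hLt : L / t * t = L := div_mul_cancel₀ L (ne_of_gt ht)
  have hLq : L - (q : ℝ) * t ≤ δ * t := by nlinarith
  have h7 : (q : ℝ) * |E t| * L ≤ 2 * M' * (δ * t) := by
    rw [abs_mul, abs_of_pos hq0] at h6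
    rw [le_div_iff₀ hL] at h6
    nlinarith
  have hB : L ≤ (q : ℝ) * (2 * t) := by
    rw [div_lt_iff₀ (by positivity)] at hqlb; linarith
  have hC : δ * (8 * M' * t * t) ≤ |E t| * L * L := by
    rw [le_div_iff₀ (by positivity)] at hδ2; exact hδ2
  have p1 : 4 * t * ((q : ℝ) * |E t| * L) ≤ 4 * t * (2 * M' * (δ * t)) :=
    mul_le_mul_of_nonneg_left h7 (by positivity)
  have p2 : 4 * t * (2 * M' * (δ * t)) = δ * (8 * M' * t * t) := by ring
  have p3 : L * (|E t| * L) ≤ ((q : ℝ) * (2 * t)) * (|E t| * L) :=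
    mul_le_mul_of_nonneg_right hB (by positivity)
  have p4 : 0 < t * (q : ℝ) * |E t| * L := by positivity
  linarith [p1, p2, p3, p4, hC]
theorem stmt9 (u₁ u₂ v₁ v₂ : ℝ) (hu : u₁ < u₂) (hv : v₁ < v₂)
    (f g h : ℝ → ℝ)
    (hfb : ∃ B, ∀ u ∈ Set.Icc u₁ u₂, |f u| ≤ B)
    (hgb : ∃ B, ∀ v ∈ Set.Icc v₁ v₂, |g v| ≤ B)
    (hhb : ∃ B, ∀ w ∈ Set.Icc (u₁ + v₁) (u₂ + v₂), |h w| ≤ B)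
    (haddeq : ∀ u ∈ Set.Icc u₁ u₂, ∀ v ∈ Set.Icc v₁ v₂, f u + g v = h (u + v)) :
    ∃ c : ℝ,
      (∀ u ∈ Set.Icc u₁ u₂, f u = f u₁ + c * (u - u₁)) ∧
      (∀ v ∈ Set.Icc v₁ v₂, g v = g v₁ + c * (v - v₁)) ∧
      (∀ w ∈ Set.Icc (u₁ + v₁) (u₂ + v₂), h w = h (u₁ + v₁) + c * (w - u₁ - v₁)) := by
  obtain ⟨Bf, hBf⟩ := hfb
  set L : ℝ := min (u₂ - u₁) (v₂ - v₁) with hLdef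
  have hL : 0 < L := lt_min (by linarith) (by linarith)
  have hLu : L ≤ u₂ - u₁ := min_le_left _ _
  have hLv : L ≤ v₂ - v₁ := min_le_right _ _
  set D : ℝ → ℝ := fun t => f (u₁ + t) - f u₁ with hD
  -- translation invariance for f
  have stepf : ∀ t, 0 ≤ t → t ≤ L → ∀ u, u₁ ≤ u → u + t ≤ u₂ → f (u + t) - f u = D t := by
    have key : ∀ t, 0 ≤ t → t ≤ L → ∀ u, u₁ ≤ u → u + t ≤ u₂ →
        f (u + t) - f u = g (v₁ + t) - g v₁ := by
      intro t ht0 htL u hu1 hu2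
      have m1 : u + t ∈ Set.Icc u₁ u₂ := ⟨by linarith, hu2⟩
      have m2 : u ∈ Set.Icc u₁ u₂ := ⟨hu1, by linarith⟩
      have m3 : v₁ ∈ Set.Icc v₁ v₂ := ⟨le_rfl, hv.le⟩
      have m4 : v₁ + t ∈ Set.Icc v₁ v₂ := ⟨by linarith, by linarith⟩
      have e1 := haddeq (u + t) m1 v₁ m3
      have e2 := haddeq u m2 (v₁ + t) m4
      have : u + t + v₁ = u + (v₁ + t) := by ring
      rw [this] at e1
      linarith
    intro t ht0 htL u hu1 hu2
    have k1 := key t ht0 htL u hu1 hu2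
    have k2 := key t ht0 htL u₁ le_rfl (by linarith)
    simp only [hD]
    linarith
  -- translation invariance for g
  have stepg : ∀ t, 0 ≤ t → t ≤ L → ∀ v, v₁ ≤ v → v + t ≤ v₂ → g (v + t) - g v = D t := by
    intro t ht0 htL v hv1 hv2
    have m1 : u₁ ∈ Set.Icc u₁ u₂ := ⟨le_rfl, hu.le⟩
    have m2 : u₁ + t ∈ Set.Icc u₁ u₂ := ⟨by linarith, by linarith⟩
    have m3 : v + t ∈ Set.Icc v₁ v₂ := ⟨by linarith, hv2⟩
    have m4 : v ∈ Set.Icc v₁ v₂ := ⟨hv1, by linarith⟩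
    have e1 := haddeq u₁ m1 (v + t) m3
    have e2 := haddeq (u₁ + t) m2 v m4
    have : u₁ + (v + t) = u₁ + t + v := by ring
    rw [this] at e1
    simp only [hD]
    linarith
  -- additivity of D on [0, L]
  have Dadd : ∀ s t, 0 ≤ s → 0 ≤ t → s + t ≤ L → D (s + t) = D s + D t := by
    intro s t hs0 ht0 hst
    have k := stepf t ht0 (by linarith) (u₁ + s) (by linarith) (by linarith)
    have : u₁ + s + t = u₁ + (s + t) := by ring
    rw [this] at k
    simp only [hD] at k ⊢
    linarith
  -- boundedness of D on [0, L]
  have Dbd : ∀ t, 0 ≤ t → t ≤ L → |D t| ≤ 2 * Bf := by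
    intro t ht0 htL
    have b1 := hBf (u₁ + t) ⟨by linarith, by linarith⟩
    have b2 := hBf u₁ ⟨le_rfl, hu.le⟩
    simp only [hD]
    calc |f (u₁ + t) - f u₁| ≤ |f (u₁ + t)| + |f u₁| := abs_sub _ _
      _ ≤ 2 * Bf := by linarith
  set c : ℝ := D L / L with hc
  set E : ℝ → ℝ := fun t => D t - c * t with hE
  have hEL : E L = 0 := by simp only [hE, hc]; field_simp; ring
  have Eadd : ∀ s t, 0 ≤ s → 0 ≤ t → s + t ≤ L → E (s + t) = E s + E t := by
    intro s t hs0 ht0 hst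
    simp only [hE]
    rw [Dadd s t hs0 ht0 hst]; ring
  have Ebd : ∀ t, 0 ≤ t → t ≤ L → |E t| ≤ 2 * Bf + |c| * L := by
    intro t ht0 htL
    simp only [hE]
    have b1 := Dbd t ht0 htL
    have b2 : |c * t| ≤ |c| * L := by
      rw [abs_mul]
      have : |t| ≤ L := by rw [abs_of_nonneg ht0]; exact htL
      exact mul_le_mul_of_nonneg_left this (abs_nonneg c)
    calc |D t - c * t| ≤ |D t| + |c * t| := abs_sub _ _
      _ ≤ 2 * Bf + |c| * L := by linarith
  have Ezero := stmt9_aux L (2 * Bf + |c| * L) hL E Eadd Ebd hEL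
  have Dlin : ∀ t, 0 ≤ t → t ≤ L → D t = c * t := by
    intro t ht0 htL
    have := Ezero t ht0 htL
    simp only [hE] at this
    linarith
  -- extend to f on all of [u₁, u₂]
  have flin : ∀ n : ℕ, ∀ t, 0 ≤ t → t ≤ n * L → u₁ + t ≤ u₂ → f (u₁ + t) = f u₁ + c * t := by
    intro n
    induction n with
    | zero =>
      intro t ht0 htn _
      simp at htn
      have : t = 0 := le_antisymm htn ht0
      rw [this]; simp
    | succ n ih =>
      intro t ht0 htn hub
      by_cases hcase : t ≤ L
      · have := Dlin t ht0 hcase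
        simp only [hD] at this
        linarith
      · push_neg at hcase
        have h1 : 0 ≤ t - L := by linarith
        have h2 : t - L ≤ n * L := by push_cast at htn ⊢; linarith
        have h3 : u₁ + (t - L) ≤ u₂ := by linarith
        have ihv := ih (t - L) h1 h2 h3
        have k := stepf L hL.le le_rfl (u₁ + (t - L)) (by linarith) (by linarith)
        have harg : u₁ + (t - L) + L = u₁ + t := by ring
        rw [harg] at k
        have hDL : D L = c * L := Dlin L hL.le le_rfl
        rw [hDL] at k
        linarith [k, ihv]
  have glin : ∀ n : ℕ, ∀ t, 0 ≤ t → t ≤ n * L → v₁ + t ≤ v₂ → g (v₁ + t) = g v₁ + c * t := by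
    intro n
    induction n with
    | zero =>
      intro t ht0 htn _
      simp at htn
      have : t = 0 := le_antisymm htn ht0
      rw [this]; simp
    | succ n ih =>
      intro t ht0 htn hub
      by_cases hcase : t ≤ L
      · have k := stepg t ht0 hcase v₁ le_rfl hub
        have := Dlin t ht0 hcase
        linarith
      · push_neg at hcase
        have h1 : 0 ≤ t - L := by linarith
        have h2 : t - L ≤ n * L := by push_cast at htn ⊢; linarith
        have h3 : v₁ + (t - L) ≤ v₂ := by linarith
        have ihv := ih (t - L) h1 h2 h3
        have k := stepg L hL.le le_rfl (v₁ + (t - L)) (by linarith) (by linarith)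
        have harg : v₁ + (t - L) + L = v₁ + t := by ring
        rw [harg] at k
        have hDL : D L = c * L := Dlin L hL.le le_rfl
        rw [hDL] at k
        linarith [k, ihv]
  have ff : ∀ u ∈ Set.Icc u₁ u₂, f u = f u₁ + c * (u - u₁) := by
    intro u hmem
    obtain ⟨h1, h2⟩ := hmem
    obtain ⟨n, hn⟩ := exists_nat_ge ((u₂ - u₁) / L)
    have hn2 : u - u₁ ≤ n * L := by
      rw [div_le_iff₀ hL] at hn
      linarith
    have := flin n (u - u₁) (by linarith) hn2 (by linarith)
    simpa using this
  have gg : ∀ v ∈ Set.Icc v₁ v₂, g v = g v₁ + c * (v - v₁) := by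
    intro v hmem
    obtain ⟨h1, h2⟩ := hmem
    obtain ⟨n, hn⟩ := exists_nat_ge ((v₂ - v₁) / L)
    have hn2 : v - v₁ ≤ n * L := by
      rw [div_le_iff₀ hL] at hn
      linarith
    have := glin n (v - v₁) (by linarith) hn2 (by linarith)
    simpa using this
  refine ⟨c, ff, gg, ?_⟩
  intro w hmem
  obtain ⟨h1, h2⟩ := hmem
  set u : ℝ := min u₂ (w - v₁) with hudef
  set v : ℝ := w - u with hvdef
  have humem : u ∈ Set.Icc u₁ u₂ := ⟨le_min hu.le (by linarith), min_le_left _ _⟩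
  have hvmem : v ∈ Set.Icc v₁ v₂ := by
    constructor
    · have : u ≤ w - v₁ := min_le_right _ _
      simp only [hvdef]; linarith
    · rcases min_cases u₂ (w - v₁) with ⟨he, _⟩ | ⟨he, _⟩
      · simp only [hvdef, hudef, he]; linarith
      · simp only [hvdef, hudef, he]; linarith
  have huv : u + v = w := by simp only [hvdef]; ring
  have e0 := haddeq u₁ ⟨le_rfl, hu.le⟩ v₁ ⟨le_rfl, hv.le⟩
  have e1 := haddeq u humem v hvmem
  rw [huv] at e1
  have e2 := ff u humem
  have e3 := gg v hvmem
  rw [← e1, e2, e3, ← e0]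
  ring
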